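/- arXiv:math/0606162 — 4 statements merged into one kernel-verified Lean document; each statement's English description precedes it below -/
import Mathlib

section
/- Let $l_1,l_2,l_3 : \mathbb{R} \to (0,\infty)$ be functions with $l_i(t) \to \infty$ and $l_3(t) - l_1(t) - l_2(t) \to \infty$ as $t \to \infty$. Let $l_{12}(t) = \operatorname{arccosh}\left(\frac{\cosh(l_3/2) + \cosh(l_1/2)\cosh(l_2/2)}{\sinh(l_1/2)\sinh(l_2/2)}\right)$. Then $l_{12}(t) - \big((l_3(t)-l_1(t)-l_2(t))/2 + \ln 4\big) \to 0$ as $t \to \infty$. -/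
open Filter

noncomputable def arcosh (x : ℝ) : ℝ := Real.log (x + Real.sqrt (x ^ 2 - 1))

noncomputable def pantsPerp (l1 l2 l3 : ℝ) : ℝ :=
  arcosh ((Real.cosh (l3 / 2) + Real.cosh (l1 / 2) * Real.cosh (l2 / 2)) /
    (Real.sinh (l1 / 2) * Real.sinh (l2 / 2)))

set_option maxHeartbeats 1000000 in
/-- If `l1, l2, l3 → ∞` and `l3 - l1 - l2 → ∞` then the perpendicular length
`l12` between the boundary components of lengths `l1` and `l2` satisfies
`l12 - ((l3 - l1 - l2)/2 + log 4) → 0`. -/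
theorem pantsPerp_asymptotic_long_leg (l1 l2 l3 : ℝ → ℝ)
    (hpos : ∀ t, 0 < l1 t ∧ 0 < l2 t ∧ 0 < l3 t)
    (h1 : Tendsto l1 atTop atTop) (h2 : Tendsto l2 atTop atTop)
    (h3 : Tendsto l3 atTop atTop)
    (hdiff : Tendsto (fun t => l3 t - l1 t - l2 t) atTop atTop) :
    Tendsto (fun t => pantsPerp (l1 t) (l2 t) (l3 t) -
      ((l3 t - l1 t - l2 t) / 2 + Real.log 4)) atTop (nhds 0) := by
  set d : ℝ → ℝ := fun t => (l3 t - l1 t - l2 t) / 2 with hd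
  set x : ℝ → ℝ := fun t =>
    (Real.cosh (l3 t / 2) + Real.cosh (l1 t / 2) * Real.cosh (l2 t / 2)) /
      (Real.sinh (l1 t / 2) * Real.sinh (l2 t / 2)) with hxdef
  -- x > 1
  have hx1 : ∀ t, 1 < x t := by
    intro t
    obtain ⟨ha, hb, hc⟩ := hpos t
    have hsa : 0 < Real.sinh (l1 t / 2) := Real.sinh_pos_iff.mpr (by linarith)
    have hsb : 0 < Real.sinh (l2 t / 2) := Real.sinh_pos_iff.mpr (by linarith)
    have hD : 0 < Real.sinh (l1 t / 2) * Real.sinh (l2 t / 2) := mul_pos hsa hsb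
    rw [hxdef, one_lt_div hD]
    have hcc : Real.sinh (l1 t / 2) * Real.sinh (l2 t / 2) + 1 ≤
        Real.cosh (l1 t / 2) * Real.cosh (l2 t / 2) := by
      have := Real.one_le_cosh (l1 t / 2 - l2 t / 2)
      rw [Real.cosh_sub] at this
      linarith
    have := Real.cosh_pos (x := l3 t / 2)
    linarith
  -- the renormalized quantity
  set y : ℝ → ℝ := fun t => x t * Real.exp (-(d t)) with hydef
  -- algebraic identity for y
  have hkey : ∀ t, y t =
      (2 * (1 + Real.exp (-(l3 t))) +
        Real.exp (-(d t)) * (1 + Real.exp (-(l1 t))) * (1 + Real.exp (-(l2 t)))) /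
      ((1 - Real.exp (-(l1 t))) * (1 - Real.exp (-(l2 t)))) := by
    intro t
    obtain ⟨ha, hb, hc⟩ := hpos t
    have E2 : ∀ s : ℝ, Real.exp (-s) = (Real.exp (s / 2))⁻¹ ^ 2 := by
      intro s
      rw [sq, ← Real.exp_neg, ← Real.exp_add]
      ring_nf
    have Ed : Real.exp (-(d t)) =
        (Real.exp (l3 t / 2))⁻¹ * Real.exp (l1 t / 2) * Real.exp (l2 t / 2) := by
      rw [← Real.exp_neg, ← Real.exp_add, ← Real.exp_add, hd]
      ring_nf
    rw [hydef, hxdef]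
    simp only [Real.cosh_eq, Real.sinh_eq]
    rw [Ed, E2 (l1 t), E2 (l2 t), E2 (l3 t)]
    simp only [Real.exp_neg]
    have gA : 1 < Real.exp (l1 t / 2) := by
      rw [show (1:ℝ) = Real.exp 0 by simp]; exact Real.exp_lt_exp.mpr (by linarith)
    have gB : 1 < Real.exp (l2 t / 2) := by
      rw [show (1:ℝ) = Real.exp 0 by simp]; exact Real.exp_lt_exp.mpr (by linarith)
    have gC : 0 < Real.exp (l3 t / 2) := Real.exp_pos _
    set A := Real.exp (l1 t / 2) with hA
    set B := Real.exp (l2 t / 2) with hB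
    set C := Real.exp (l3 t / 2) with hC
    have hA0 : A ≠ 0 := by positivity
    have hB0 : B ≠ 0 := by positivity
    have hC0 : C ≠ 0 := ne_of_gt gC
    have hAi : A⁻¹ < 1 := inv_lt_one_of_one_lt₀ gA
    have hBi : B⁻¹ < 1 := inv_lt_one_of_one_lt₀ gB
    have hA1 : A - A⁻¹ ≠ 0 := by
      have h0 : (0:ℝ) ≤ A⁻¹ := by positivity
      exact ne_of_gt (by linarith)
    have hB1 : B - B⁻¹ ≠ 0 := by
      have h0 : (0:ℝ) ≤ B⁻¹ := by positivity
      exact ne_of_gt (by linarith)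
    have h1a : (1 : ℝ) - A⁻¹ ^ 2 ≠ 0 := by
      have h0 : (0:ℝ) ≤ A⁻¹ := by positivity
      have := pow_lt_one₀ h0 hAi (two_ne_zero)
      exact ne_of_gt (by linarith)
    have h1b : (1 : ℝ) - B⁻¹ ^ 2 ≠ 0 := by
      have h0 : (0:ℝ) ≤ B⁻¹ := by positivity
      have := pow_lt_one₀ h0 hBi (two_ne_zero)
      exact ne_of_gt (by linarith)
    rw [div_mul_eq_mul_div, div_eq_div_iff
      (mul_ne_zero (div_ne_zero hA1 two_ne_zero) (div_ne_zero hB1 two_ne_zero))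
      (mul_ne_zero h1a h1b)]
    field_simp
  -- limits
  have hexp0 : ∀ (f : ℝ → ℝ), Tendsto f atTop atTop →
      Tendsto (fun t => Real.exp (-(f t))) atTop (nhds 0) := by
    intro f hf
    exact Real.tendsto_exp_atBot.comp (tendsto_neg_atTop_atBot.comp hf)
  have hd' : Tendsto d atTop atTop := hdiff.atTop_div_const (by norm_num)
  have hu := hexp0 l1 h1
  have hv := hexp0 l2 h2
  have hw := hexp0 l3 h3
  have he := hexp0 d hd'
  have hy : Tendsto y atTop (nhds 2) := by
    have : Tendsto (fun t =>
        (2 * (1 + Real.exp (-(l3 t))) +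
          Real.exp (-(d t)) * (1 + Real.exp (-(l1 t))) * (1 + Real.exp (-(l2 t)))) /
        ((1 - Real.exp (-(l1 t))) * (1 - Real.exp (-(l2 t))))) atTop
        (nhds ((2 * (1 + 0) + 0 * (1 + 0) * (1 + 0)) / ((1 - 0) * (1 - 0)))) := by
      apply Tendsto.div
      · exact (((tendsto_const_nhds.add hw).const_mul 2).add
          (((he.mul (tendsto_const_nhds.add hu))).mul (tendsto_const_nhds.add hv)))
      · exact (tendsto_const_nhds.sub hu).mul (tendsto_const_nhds.sub hv)
      · norm_num
    norm_num at this
    exact Tendsto.congr (fun t => (hkey t).symm) this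
  have hz : Tendsto (fun t => y t + Real.sqrt (y t ^ 2 - Real.exp (-(d t)) ^ 2))
      atTop (nhds 4) := by
    have hsq : Tendsto (fun t => Real.sqrt (y t ^ 2 - Real.exp (-(d t)) ^ 2))
        atTop (nhds 2) := by
      have h4 : Tendsto (fun t => y t ^ 2 - Real.exp (-(d t)) ^ 2) atTop
          (nhds ((2:ℝ) ^ 2 - 0 ^ 2)) := (hy.pow 2).sub (he.pow 2)
      have := (Real.continuous_sqrt.tendsto ((2:ℝ) ^ 2 - 0 ^ 2)).comp h4
      norm_num at this ⊢
      convert this using 2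
      rfl
    have := hy.add hsq
    norm_num at this
    exact this
  -- pointwise identity with the goal
  have hgoal : ∀ t, pantsPerp (l1 t) (l2 t) (l3 t) -
      ((l3 t - l1 t - l2 t) / 2 + Real.log 4) =
      Real.log (y t + Real.sqrt (y t ^ 2 - Real.exp (-(d t)) ^ 2)) - Real.log 4 := by
    intro t
    have hx := hx1 t
    have hxs : 0 ≤ x t ^ 2 - 1 := by nlinarith
    have hA : 0 < x t + Real.sqrt (x t ^ 2 - 1) := by
      have := Real.sqrt_nonneg (x t ^ 2 - 1); linarith
    have hsqrt : Real.sqrt (x t ^ 2 - 1) * Real.exp (-(d t)) =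
        Real.sqrt (y t ^ 2 - Real.exp (-(d t)) ^ 2) := by
      rw [show Real.exp (-(d t)) = Real.sqrt (Real.exp (-(d t)) ^ 2) by
            rw [Real.sqrt_sq (Real.exp_pos _).le],
        ← Real.sqrt_mul hxs]
      congr 1
      rw [Real.sqrt_sq (Real.exp_pos _).le, hydef]
      ring
    have : pantsPerp (l1 t) (l2 t) (l3 t) =
        Real.log (x t + Real.sqrt (x t ^ 2 - 1)) := rfl
    rw [this, hd]
    rw [show Real.log (y t + Real.sqrt (y t ^ 2 - Real.exp (-(d t)) ^ 2)) =
        Real.log ((x t + Real.sqrt (x t ^ 2 - 1)) * Real.exp (-(d t))) by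
      congr 1
      rw [add_mul, hsqrt, hydef]]
    rw [Real.log_mul (ne_of_gt hA) (Real.exp_ne_zero _), Real.log_exp, hd]
    ring
  have hfin : Tendsto (fun t =>
      Real.log (y t + Real.sqrt (y t ^ 2 - Real.exp (-(d t)) ^ 2)) - Real.log 4)
      atTop (nhds 0) := by
    have := ((Real.continuousAt_log (by norm_num : (4:ℝ) ≠ 0)).tendsto.comp hz).sub_const
      (Real.log 4)
    simpa using this
  exact Tendsto.congr (fun t => (hgoal t).symm) hfin
end

section
/- Let $l_1,l_2,l_3 \to \infty$ with $l_1+l_2-l_3 \to \infty$. Then $\operatorname{arccosh}\left(\frac{\cosh(l_3/2) + \cosh(l_1/2)\cosh(l_2/2)}{\sinh(l_1/2)\sinh(l_2/2)}\right) \to 0$, i.e. the perpendicular distance between the boundary components of lengths $l_1$ and $l_2$ of a hyperbolic pair of pants tends to zero when $l_1+l_2-l_3 \to \infty$. -/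
open Filter

lemma coth_tendsto {a : ℝ → ℝ} (ha : Tendsto a atTop atTop) :
    Tendsto (fun t => Real.cosh (a t) / Real.sinh (a t)) atTop (nhds 1) := by
  have hu : Tendsto (fun t => Real.exp (-(2 * a t))) atTop (nhds 0) :=
    Real.tendsto_exp_atBot.comp (tendsto_neg_atTop_atBot.comp (ha.const_mul_atTop two_pos))
  have h : Tendsto (fun t => (1 + Real.exp (-(2 * a t))) / (1 - Real.exp (-(2 * a t))))
      atTop (nhds 1) := by
    have hnum : Tendsto (fun t => 1 + Real.exp (-(2 * a t))) atTop (nhds (1 + 0)) :=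
      tendsto_const_nhds.add hu
    have hden : Tendsto (fun t => 1 - Real.exp (-(2 * a t))) atTop (nhds (1 - 0)) :=
      tendsto_const_nhds.sub hu
    have := hnum.div hden (by norm_num)
    simpa [Pi.div_def] using this
  refine h.congr' ?_
  filter_upwards [ha.eventually_gt_atTop 0] with t ht
  have hE1 : (1:ℝ) < Real.exp (a t) := Real.one_lt_exp_iff.mpr ht
  have hE : Real.exp (a t) ≠ 0 := (Real.exp_pos _).ne'
  rw [Real.cosh_eq, Real.sinh_eq, show -(2*a t) = -(a t) + -(a t) by ring, Real.exp_add,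
    Real.exp_neg]
  have hne1 : 1 - (Real.exp (a t))⁻¹ * (Real.exp (a t))⁻¹ ≠ 0 := by
    have : (Real.exp (a t))⁻¹ < 1 := inv_lt_one_of_one_lt₀ hE1
    have h0 : (0:ℝ) < (Real.exp (a t))⁻¹ := inv_pos.mpr (Real.exp_pos _)
    nlinarith
  have hne2 : Real.exp (a t) - (Real.exp (a t))⁻¹ ≠ 0 := by
    have : (Real.exp (a t))⁻¹ < 1 := inv_lt_one_of_one_lt₀ hE1
    nlinarith
  field_simp

/-- If `l1, l2, l3 → ∞` and `l1 + l2 - l3 → ∞`, the perpendicular distance between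
the boundary components of lengths `l1` and `l2` of a hyperbolic pair of pants with
boundary lengths `l1, l2, l3` tends to zero. -/
theorem pantsPerp_tendsto_zero (l1 l2 l3 : ℝ → ℝ)
    (hpos : ∀ t, 0 < l1 t ∧ 0 < l2 t ∧ 0 < l3 t)
    (h1 : Tendsto l1 atTop atTop) (h2 : Tendsto l2 atTop atTop)
    (h3 : Tendsto l3 atTop atTop)
    (hdiff : Tendsto (fun t => l1 t + l2 t - l3 t) atTop atTop) :
    Tendsto (fun t => pantsPerp (l1 t) (l2 t) (l3 t)) atTop (nhds 0) := by
  set a : ℝ → ℝ := fun t => l1 t / 2 with ha_def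
  set b : ℝ → ℝ := fun t => l2 t / 2 with hb_def
  set c : ℝ → ℝ := fun t => l3 t / 2 with hc_def
  have hat : Tendsto a atTop atTop := h1.atTop_div_const two_pos
  have hbt : Tendsto b atTop atTop := h2.atTop_div_const two_pos
  -- the argument of arcosh tends to 1
  have hfirst : Tendsto (fun t => Real.cosh (c t) / (Real.sinh (a t) * Real.sinh (b t)))
      atTop (nhds 0) := by
    have hg : Tendsto (fun t => 16 * Real.exp (c t - a t - b t)) atTop (nhds 0) := by
      have : Tendsto (fun t => c t - a t - b t) atTop atBot := by
        have : Tendsto (fun t => -((l1 t + l2 t - l3 t) / 2)) atTop atBot :=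
          tendsto_neg_atTop_atBot.comp (hdiff.atTop_div_const two_pos)
        refine this.congr (fun t => by simp [ha_def, hb_def, hc_def]; ring)
      simpa using (Real.tendsto_exp_atBot.comp this).const_mul (16:ℝ)
    refine squeeze_zero' ?_ ?_ hg
    · filter_upwards [] with t
      have hap : 0 < a t := by have := (hpos t).1; simp [ha_def]; linarith
      have hbp : 0 < b t := by have := (hpos t).2.1; simp [hb_def]; linarith
      positivity
    · filter_upwards [hat.eventually_ge_atTop 1, hbt.eventually_ge_atTop 1] with t hta htb
      have hcp : 0 ≤ c t := by have := (hpos t).2.2; simp [hc_def]; linarith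
      have hcosh : Real.cosh (c t) ≤ Real.exp (c t) := by
        rw [Real.cosh_eq]
        have : Real.exp (-(c t)) ≤ Real.exp (c t) := Real.exp_le_exp.mpr (by linarith)
        linarith
      have hsinha : Real.exp (a t) / 4 ≤ Real.sinh (a t) := by
        rw [Real.sinh_eq]
        have h1 : Real.exp (-(a t)) ≤ 1 := Real.exp_le_one_iff.mpr (by linarith)
        have h2 : (2:ℝ) ≤ Real.exp (a t) := by
          calc (2:ℝ) ≤ Real.exp 1 := by
                have := Real.add_one_le_exp (1:ℝ); linarith
            _ ≤ Real.exp (a t) := Real.exp_le_exp.mpr hta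
        linarith
      have hsinhb : Real.exp (b t) / 4 ≤ Real.sinh (b t) := by
        rw [Real.sinh_eq]
        have h1 : Real.exp (-(b t)) ≤ 1 := Real.exp_le_one_iff.mpr (by linarith)
        have h2 : (2:ℝ) ≤ Real.exp (b t) := by
          calc (2:ℝ) ≤ Real.exp 1 := by
                have := Real.add_one_le_exp (1:ℝ); linarith
            _ ≤ Real.exp (b t) := Real.exp_le_exp.mpr htb
        linarith
      have hsa : 0 < Real.sinh (a t) := lt_of_lt_of_le (by positivity) hsinha
      have hsb : 0 < Real.sinh (b t) := lt_of_lt_of_le (by positivity) hsinhb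
      rw [div_le_iff₀ (by positivity)]
      calc Real.cosh (c t) ≤ Real.exp (c t) := hcosh
        _ = 16 * Real.exp (c t - a t - b t) * (Real.exp (a t) / 4 * (Real.exp (b t) / 4)) := by
            rw [Real.exp_sub, Real.exp_sub]; field_simp; ring
        _ ≤ 16 * Real.exp (c t - a t - b t) * (Real.sinh (a t) * Real.sinh (b t)) := by
            have h16 : (0:ℝ) < 16 * Real.exp (c t - a t - b t) := by positivity
            apply mul_le_mul_of_nonneg_left _ h16.le
            exact mul_le_mul hsinha hsinhb (by positivity) hsa.le
  have hsecond : Tendsto (fun t => (Real.cosh (a t) / Real.sinh (a t)) *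
      (Real.cosh (b t) / Real.sinh (b t))) atTop (nhds 1) := by
    simpa using (coth_tendsto hat).mul (coth_tendsto hbt)
  have hx : Tendsto (fun t => (Real.cosh (c t) + Real.cosh (a t) * Real.cosh (b t)) /
      (Real.sinh (a t) * Real.sinh (b t))) atTop (nhds 1) := by
    have := hfirst.add hsecond
    rw [zero_add] at this
    refine this.congr' ?_
    filter_upwards [hat.eventually_gt_atTop 0, hbt.eventually_gt_atTop 0] with t hta htb
    have hsa : Real.sinh (a t) ≠ 0 := (Real.sinh_pos_iff.mpr hta).ne'
    have hsb : Real.sinh (b t) ≠ 0 := (Real.sinh_pos_iff.mpr htb).ne'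
    field_simp
  -- arcosh is continuous at 1 with value 0
  have hcont : ContinuousAt arcosh 1 := by
    unfold arcosh
    apply ContinuousAt.log
    · exact (continuousAt_id.add (((continuousAt_id.pow 2).sub continuousAt_const).sqrt))
    · norm_num
  have harc1 : arcosh 1 = 0 := by unfold arcosh; norm_num
  have := (hcont.tendsto.comp hx)
  rw [harc1] at this
  exact this.congr (fun t => rfl)
end

section
/- Let $l_1, l_2, l_3 > 0$ and let $l_{13}$ satisfy $\cosh(l_{13}) = \frac{\cosh(l_2/2)}{\sinh(l_1/2)\sinh(l_3/2)} + \coth(l_1/2)\coth(l_3/2)$, and let $l_\alpha$ satisfy $\cosh(l_\alpha/2) = \sinh(l_1/2)\sinh(l_{13})$. Then $\cosh^2(l_\alpha/2) \ge 1 + 2\,\frac{\sinh(l_1/2)\cosh(l_2/2)\coth(l_1/2)\coth(l_3/2)}{\sinh(l_3/2)}$. Consequently, if along a sequence $l_\alpha \to 0$ and $l_1, l_2, l_3 \to \infty$, then $l_3 - l_1 - l_2 \to \infty$. -/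
open Filter

private lemma alg_ineq (s1 c1 s3 c3 C2 : ℝ) (hs1 : 0 < s1) (hs3 : 0 < s3)
    (h1 : c1 ^ 2 = 1 + s1 ^ 2) (h3 : c3 ^ 2 = 1 + s3 ^ 2) (hC : 1 ≤ C2) :
    s1 ^ 2 * ((C2 / (s1 * s3) + (c1 / s1) * (c3 / s3)) ^ 2 - 1) ≥
      1 + 2 * s1 * C2 * (c1 / s1) * (c3 / s3) / s3 := by
  rw [ge_iff_le]
  have hs1' := hs1.ne'
  have hs3' := hs3.ne'
  rw [← sub_nonneg]
  have e : s1 ^ 2 * ((C2 / (s1 * s3) + c1 / s1 * (c3 / s3)) ^ 2 - 1) -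
      (1 + 2 * s1 * C2 * (c1 / s1) * (c3 / s3) / s3) =
      (C2 ^ 2 + c1 ^ 2 * c3 ^ 2 - (s1 ^ 2 + 1) * s3 ^ 2) / s3 ^ 2 := by
    field_simp
    ring
  rw [e, h1, h3]
  have : C2 ^ 2 + (1 + s1 ^ 2) * (1 + s3 ^ 2) - (s1 ^ 2 + 1) * s3 ^ 2 =
      C2 ^ 2 + 1 + s1 ^ 2 := by ring
  rw [this]
  positivity

/-- Case 2 of the telescoping theorem: with `cosh l13` given by the law of cosines and
`cosh(lα/2) = sinh(l1/2) sinh(l13)`, one has the lower bound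
`cosh²(lα/2) ≥ 1 + 2 sinh(l1/2)cosh(l2/2)coth(l1/2)coth(l3/2)/sinh(l3/2)`; consequently
if `lα → 0` and `l1, l2, l3 → ∞` then `l3 - l1 - l2 → ∞`. -/
theorem telescoping_case_two (l1 l2 l3 l13 lα : ℝ → ℝ)
    (hpos : ∀ t, 0 < l1 t ∧ 0 < l2 t ∧ 0 < l3 t)
    (h13 : ∀ t, Real.cosh (l13 t) =
      Real.cosh (l2 t / 2) / (Real.sinh (l1 t / 2) * Real.sinh (l3 t / 2)) +
        (Real.cosh (l1 t / 2) / Real.sinh (l1 t / 2)) *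
          (Real.cosh (l3 t / 2) / Real.sinh (l3 t / 2)))
    (hα : ∀ t, Real.cosh (lα t / 2) = Real.sinh (l1 t / 2) * Real.sinh (l13 t)) :
    (∀ t, Real.cosh (lα t / 2) ^ 2 ≥
      1 + 2 * Real.sinh (l1 t / 2) * Real.cosh (l2 t / 2) *
        (Real.cosh (l1 t / 2) / Real.sinh (l1 t / 2)) *
          (Real.cosh (l3 t / 2) / Real.sinh (l3 t / 2)) / Real.sinh (l3 t / 2)) ∧
    (Tendsto lα atTop (nhds 0) → Tendsto l1 atTop atTop → Tendsto l2 atTop atTop →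
      Tendsto l3 atTop atTop →
      Tendsto (fun t => l3 t - l1 t - l2 t) atTop atTop) := by
  have hs1 : ∀ t, 0 < Real.sinh (l1 t / 2) := fun t =>
    Real.sinh_pos_iff.2 (by linarith [(hpos t).1])
  have hs3 : ∀ t, 0 < Real.sinh (l3 t / 2) := fun t =>
    Real.sinh_pos_iff.2 (by linarith [(hpos t).2.2])
  have key : ∀ t, Real.cosh (lα t / 2) ^ 2 ≥
      1 + 2 * Real.sinh (l1 t / 2) * Real.cosh (l2 t / 2) *
        (Real.cosh (l1 t / 2) / Real.sinh (l1 t / 2)) *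
          (Real.cosh (l3 t / 2) / Real.sinh (l3 t / 2)) / Real.sinh (l3 t / 2) := by
    intro t
    have h := alg_ineq (Real.sinh (l1 t / 2)) (Real.cosh (l1 t / 2))
      (Real.sinh (l3 t / 2)) (Real.cosh (l3 t / 2)) (Real.cosh (l2 t / 2))
      (hs1 t) (hs3 t) (by rw [Real.cosh_sq']) (by rw [Real.cosh_sq'])
      (Real.one_le_cosh _)
    calc Real.cosh (lα t / 2) ^ 2
        = Real.sinh (l1 t / 2) ^ 2 * (Real.cosh (l13 t) ^ 2 - 1) := by
          rw [hα t, mul_pow, ← Real.sinh_sq]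
      _ ≥ _ := by rw [h13 t]; exact h
  refine ⟨key, fun hα0 h1t h2t h3t => ?_⟩
  -- pointwise exponential bound
  have hb : ∀ t, Real.exp ((l1 t + l2 t - l3 t) / 2) ≤ Real.sinh (lα t / 2) ^ 2 := by
    intro t
    have hc1 : Real.exp (l1 t / 2) / 2 ≤ Real.cosh (l1 t / 2) := by
      rw [Real.cosh_eq]; have := Real.exp_pos (-(l1 t / 2)); linarith
    have hc2 : Real.exp (l2 t / 2) / 2 ≤ Real.cosh (l2 t / 2) := by
      rw [Real.cosh_eq]; have := Real.exp_pos (-(l2 t / 2)); linarith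
    have hs3e : Real.sinh (l3 t / 2) ≤ Real.exp (l3 t / 2) / 2 := by
      rw [Real.sinh_eq]; have := Real.exp_pos (-(l3 t / 2)); linarith
    have hsc3 : Real.sinh (l3 t / 2) ≤ Real.cosh (l3 t / 2) := by
      rw [Real.sinh_eq, Real.cosh_eq]; have := Real.exp_pos (-(l3 t / 2)); linarith
    have hcoth3 : 1 ≤ Real.cosh (l3 t / 2) / Real.sinh (l3 t / 2) :=
      (one_le_div (hs3 t)).2 hsc3
    have hsq : Real.sinh (lα t / 2) ^ 2 = Real.cosh (lα t / 2) ^ 2 - 1 := by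
      rw [Real.sinh_sq]
    have h1 := key t
    have hstep : 2 * Real.cosh (l2 t / 2) * Real.cosh (l1 t / 2) / Real.sinh (l3 t / 2) ≤
        2 * Real.sinh (l1 t / 2) * Real.cosh (l2 t / 2) *
          (Real.cosh (l1 t / 2) / Real.sinh (l1 t / 2)) *
            (Real.cosh (l3 t / 2) / Real.sinh (l3 t / 2)) / Real.sinh (l3 t / 2) := by
      rw [div_le_div_iff₀ (hs3 t) (hs3 t)]
      have hne := (hs1 t).ne'
      have hfact : 2 * Real.sinh (l1 t / 2) * Real.cosh (l2 t / 2) *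
          (Real.cosh (l1 t / 2) / Real.sinh (l1 t / 2)) =
          2 * Real.cosh (l2 t / 2) * Real.cosh (l1 t / 2) := by
        field_simp
      rw [hfact]
      have hnn : 0 ≤ 2 * Real.cosh (l2 t / 2) * Real.cosh (l1 t / 2) * Real.sinh (l3 t / 2) :=
        le_of_lt (by
          have := Real.cosh_pos (l2 t / 2)
          have := Real.cosh_pos (l1 t / 2)
          have := hs3 t
          positivity)
      nlinarith [mul_le_mul_of_nonneg_left hcoth3 hnn]
    have hexp : Real.exp ((l1 t + l2 t - l3 t) / 2) ≤
        2 * Real.cosh (l2 t / 2) * Real.cosh (l1 t / 2) / Real.sinh (l3 t / 2) := by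
      rw [le_div_iff₀ (hs3 t)]
      have hmul : Real.exp ((l1 t + l2 t - l3 t) / 2) * Real.exp (l3 t / 2) =
          Real.exp (l1 t / 2) * Real.exp (l2 t / 2) := by
        rw [← Real.exp_add, ← Real.exp_add]; ring_nf
      have he1 := Real.exp_pos (l1 t / 2)
      have he2 := Real.exp_pos (l2 t / 2)
      have heq := Real.exp_pos ((l1 t + l2 t - l3 t) / 2)
      nlinarith [mul_le_mul hc2 hc1 (by positivity) (Real.cosh_pos _).le,
        mul_le_mul_of_nonneg_left hs3e heq.le]
    rw [hsq]
    linarith [hexp.trans hstep]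
  -- hence (l1+l2-l3)/2 ≤ log (sinh(lα/2)^2)
  have hlog : ∀ t, -(2 * Real.log (Real.sinh (lα t / 2) ^ 2)) ≤ l3 t - l1 t - l2 t := by
    intro t
    have := Real.log_le_log (Real.exp_pos _) (hb t)
    rw [Real.log_exp] at this
    linarith
  -- sinh(lα/2)^2 → 0 within (0,∞)
  have hpos' : ∀ t, 0 < Real.sinh (lα t / 2) ^ 2 := fun t =>
    lt_of_lt_of_le (Real.exp_pos _) (hb t)
  have hcont : Tendsto (fun t => Real.sinh (lα t / 2) ^ 2) atTop (nhds 0) := by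
    have : Continuous fun x : ℝ => Real.sinh (x / 2) ^ 2 := by continuity
    have h0 : Real.sinh ((0:ℝ) / 2) ^ 2 = 0 := by norm_num
    have := (this.tendsto 0).comp hα0
    rwa [h0] at this
  have hnw : Tendsto (fun t => Real.sinh (lα t / 2) ^ 2) atTop (nhdsWithin 0 (Set.Ioi 0)) :=
    tendsto_nhdsWithin_of_tendsto_nhds_of_eventually_within _ hcont
      (Eventually.of_forall fun t => hpos' t)
  have hlogbot : Tendsto (fun t => Real.log (Real.sinh (lα t / 2) ^ 2)) atTop atBot :=
    Real.tendsto_log_nhdsGT_zero.comp hnw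
  have htop : Tendsto (fun t => -(2 * Real.log (Real.sinh (lα t / 2) ^ 2))) atTop atTop := by
    have := hlogbot.const_mul_atBot (by norm_num : (0:ℝ) < 2)
    exact tendsto_neg_atBot_atTop.comp this
  exact tendsto_atTop_mono hlog htop
end

section
/- Let $x(t), y(t) \to \infty$ be real functions. Suppose $l_\alpha(t)$ is defined by $\cosh(l_\alpha) = 1 + 2e^{-l_1} + 2e^{-l_2} + 2e^{(l_3 - l_1 - l_2)/2} + E(t)$ where $l_1, l_2, l_3 \to \infty$ and $|E(t)| \le C(e^{-2l_1} + e^{-2l_2} + e^{(-l_1 - 3l_2 + l_3)/2} + e^{(-3l_1 - l_2 + l_3)/2})$ with $l_3 \le l_1 + l_2$. If $l_\alpha(t) \to 0$, then $l_1 + l_2 - l_3 \to \infty$. -/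
open Filter

/-- Case 1 of the telescoping theorem: if `cosh lα` has the stated expansion with a
bounded error term, `l1, l2, l3 → ∞`, `l3 ≤ l1 + l2`, and `lα → 0`, then
`l1 + l2 - l3 → ∞`. -/
theorem telescoping_case_one (l1 l2 l3 lα E : ℝ → ℝ) (C : ℝ) (hC : 0 < C)
    (h1 : Tendsto l1 atTop atTop) (h2 : Tendsto l2 atTop atTop)
    (h3 : Tendsto l3 atTop atTop)
    (hcosh : ∀ t, Real.cosh (lα t) =
      1 + 2 * Real.exp (-l1 t) + 2 * Real.exp (-l2 t) +
        2 * Real.exp ((l3 t - l1 t - l2 t) / 2) + E t)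
    (hE : ∀ t, |E t| ≤ C * (Real.exp (-2 * l1 t) + Real.exp (-2 * l2 t) +
      Real.exp ((-l1 t - 3 * l2 t + l3 t) / 2) + Real.exp ((-3 * l1 t - l2 t + l3 t) / 2)))
    (hle : ∀ t, l3 t ≤ l1 t + l2 t)
    (hα : Tendsto lα atTop (nhds 0)) :
    Tendsto (fun t => l1 t + l2 t - l3 t) atTop atTop := by
  have hneg1 : Tendsto (fun t => -l1 t) atTop atBot := tendsto_neg_atTop_atBot.comp h1
  have hneg2 : Tendsto (fun t => -l2 t) atTop atBot := tendsto_neg_atTop_atBot.comp h2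
  have he1 : Tendsto (fun t => Real.exp (-l1 t)) atTop (nhds 0) :=
    Real.tendsto_exp_atBot.comp hneg1
  have he2 : Tendsto (fun t => Real.exp (-l2 t)) atTop (nhds 0) :=
    Real.tendsto_exp_atBot.comp hneg2
  -- first two error terms
  have hE1 : Tendsto (fun t => Real.exp (-2 * l1 t)) atTop (nhds 0) := by
    refine Real.tendsto_exp_atBot.comp ?_
    have : Tendsto (fun t => -l1 t + -l1 t) atTop atBot := Tendsto.atBot_add_atBot hneg1 hneg1
    exact this.congr (fun t => by ring)
  have hE2 : Tendsto (fun t => Real.exp (-2 * l2 t)) atTop (nhds 0) := by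
    refine Real.tendsto_exp_atBot.comp ?_
    have : Tendsto (fun t => -l2 t + -l2 t) atTop atBot := Tendsto.atBot_add_atBot hneg2 hneg2
    exact this.congr (fun t => by ring)
  -- last two error terms, squeezed using l3 ≤ l1 + l2
  have hE3 : Tendsto (fun t => Real.exp ((-l1 t - 3 * l2 t + l3 t) / 2)) atTop (nhds 0) := by
    refine squeeze_zero (fun t => (Real.exp_pos _).le) (fun t => ?_) he2
    exact Real.exp_le_exp.2 (by have := hle t; linarith)
  have hE4 : Tendsto (fun t => Real.exp ((-3 * l1 t - l2 t + l3 t) / 2)) atTop (nhds 0) := by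
    refine squeeze_zero (fun t => (Real.exp_pos _).le) (fun t => ?_) he1
    exact Real.exp_le_exp.2 (by have := hle t; linarith)
  have hE0 : Tendsto E atTop (nhds 0) := by
    refine squeeze_zero_norm (fun t => hE t) ?_
    have : Tendsto (fun t => C * (Real.exp (-2 * l1 t) + Real.exp (-2 * l2 t) +
        Real.exp ((-l1 t - 3 * l2 t + l3 t) / 2) + Real.exp ((-3 * l1 t - l2 t + l3 t) / 2)))
        atTop (nhds (C * (0 + 0 + 0 + 0))) :=
      (((hE1.add hE2).add hE3).add hE4).const_mul C
    simpa using this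
  have hcoshα : Tendsto (fun t => Real.cosh (lα t)) atTop (nhds 1) := by
    have := (Real.continuous_cosh.tendsto 0).comp hα
    simpa [Function.comp_def] using this
  -- key: the exponential term tends to 0
  have hkey : Tendsto (fun t => Real.exp ((l3 t - l1 t - l2 t) / 2)) atTop (nhds 0) := by
    have heq : (fun t => Real.exp ((l3 t - l1 t - l2 t) / 2)) =
        fun t => (Real.cosh (lα t) - 1 - 2 * Real.exp (-l1 t) - 2 * Real.exp (-l2 t) - E t) / 2 := by
      funext t
      have := hcosh t
      linarith
    rw [heq]
    have : Tendsto (fun t => (Real.cosh (lα t) - 1 - 2 * Real.exp (-l1 t) -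
        2 * Real.exp (-l2 t) - E t) / 2) atTop
        (nhds ((1 - 1 - 2 * 0 - 2 * 0 - 0) / 2)) := by
      exact ((((hcoshα.sub tendsto_const_nhds).sub (he1.const_mul 2)).sub
        (he2.const_mul 2)).sub hE0).div_const 2
    simpa using this
  have hbot : Tendsto (fun t => (l3 t - l1 t - l2 t) / 2) atTop atBot :=
    Real.tendsto_exp_comp_nhds_zero.mp hkey
  have htop := tendsto_neg_atBot_atTop.comp hbot
  exact (Tendsto.atTop_add_atTop htop htop).congr fun t => by simp only [Function.comp_apply]; ring
end
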